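/- Fix n ≥ 2, N ≥ 1, and integers 1 ≤ a ≤ b ≤ n−1 with a + b ≤ n. Then any partition of the product space ({0,1}^N)^n into Π_{[a,b]}^N-monochromatic boxes has at least (C(n,a−1) + C(n,b) + C(n,b+1))^N = (C(n+1,b+1) + C(n,a−1))^N parts. -/

import Mathlib

/-- The Hamming weight of the `j`-th column of an `n × N` Boolean measurement matrix. -/
def colWeight {n N : ℕ} (M : Fin n → Fin N → Bool) (j : Fin N) : ℕ :=
  (Finset.univ.filter fun i => M i j = true).card

/-- The block interval function `Π_{[a,b]}^N`: its `j`-th coordinate is `1` iff the `j`-th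
column of `M` has between `a` and `b` ones. -/
def blockInterval {n N : ℕ} (a b : ℕ) (M : Fin n → Fin N → Bool) : Fin N → Bool :=
  fun j => decide (a ≤ colWeight M j ∧ colWeight M j ≤ b)

/-- Weight of a boolean vector. -/
def wtv {n : ℕ} (c : Fin n → Bool) : ℕ := (Finset.univ.filter fun i => c i = true).card

lemma wtv_update_true {n : ℕ} (c : Fin n → Bool) (r : Fin n) (hr : c r = false) :
    wtv (Function.update c r true) = wtv c + 1 := by
  unfold wtv
  have : (Finset.univ.filter fun i => Function.update c r true i = true)
      = insert r (Finset.univ.filter fun i => c i = true) := by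
    ext i
    by_cases h : i = r <;> simp [h, Function.update_apply]
  rw [this, Finset.card_insert_of_notMem (by simp [hr])]

lemma wtv_update_false {n : ℕ} (c : Fin n → Bool) (r : Fin n) (hr : c r = true) :
    wtv (Function.update c r false) + 1 = wtv c := by
  unfold wtv
  have : (Finset.univ.filter fun i => Function.update c r false i = true)
      = (Finset.univ.filter fun i => c i = true).erase r := by
    ext i
    by_cases h : i = r <;> simp [h, Function.update_apply]
  rw [this, Finset.card_erase_add_one (by simp [hr])]

lemma exists_up {n : ℕ} {c c' : Fin n → Bool} (hle : wtv c ≤ wtv c') (hne : c ≠ c') :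
    ∃ r, c r = false ∧ c' r = true := by
  by_contra h
  push_neg at h
  have hsub : (Finset.univ.filter fun i => c' i = true) ⊆
      (Finset.univ.filter fun i => c i = true) := by
    intro i hi
    simp only [Finset.mem_filter, Finset.mem_univ, true_and] at hi ⊢
    rcases Bool.eq_false_or_eq_true (c i) with h1 | h0
    · exact h1
    · exact absurd hi (h i h0)
  have heq : (Finset.univ.filter fun i => c' i = true)
      = (Finset.univ.filter fun i => c i = true) :=
    Finset.eq_of_subset_of_card_le hsub hle
  apply hne
  funext i
  by_cases hi : c' i = true
  · have : i ∈ (Finset.univ.filter fun i => c' i = true) := by simp [hi]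
    rw [heq] at this
    simp only [Finset.mem_filter, Finset.mem_univ, true_and] at this
    rw [this, hi]
  · have hci : ¬ (c i = true) := by
      intro hc
      have : i ∈ (Finset.univ.filter fun i => c i = true) := by simp [hc]
      rw [← heq] at this
      simp only [Finset.mem_filter, Finset.mem_univ, true_and] at this
      exact hi this
    rw [Bool.not_eq_true] at hi hci
    rw [hi, hci]

/-- Interval function on a vector. -/
def piv {n : ℕ} (a b : ℕ) (c : Fin n → Bool) : Bool := decide (a ≤ wtv c ∧ wtv c ≤ b)

lemma piv_weight {n : ℕ} (a b : ℕ) {c c' : Fin n → Bool} (h : wtv c = wtv c') :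
    piv a b c = piv a b c' := by unfold piv; rw [h]

lemma col_step {n a b : ℕ} (ha : 1 ≤ a) (hab : a ≤ b)
    {c c' : Fin n → Bool}
    (hc : wtv c = a - 1 ∨ wtv c = b ∨ wtv c = b + 1)
    (hc' : wtv c' = a - 1 ∨ wtv c' = b ∨ wtv c' = b + 1)
    (hne : c ≠ c') (hpi : piv a b c = piv a b c') :
    ∃ r, c r ≠ c' r ∧ piv a b (Function.update c r (c' r)) ≠ piv a b c := by
  classical
  -- values of piv at the three weights
  have pA : ∀ d : Fin n → Bool, wtv d = a - 1 → piv a b d = false := by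
    intro d hd; simp only [piv, hd, decide_eq_false_iff_not]
    intro ⟨h1, _⟩; omega
  have pB : ∀ d : Fin n → Bool, wtv d = b → piv a b d = true := by
    intro d hd; simp only [piv, hd, decide_eq_true_eq]; omega
  have pC : ∀ d : Fin n → Bool, wtv d = b + 1 → piv a b d = false := by
    intro d hd; simp only [piv, hd, decide_eq_false_iff_not]
    intro ⟨_, h2⟩; omega
  -- case of an "up" flip: c r = false, c' r = true
  have up : wtv c ≤ wtv c' → (wtv c = a - 1 ∨ wtv c = b) →
      ∃ r, c r ≠ c' r ∧ piv a b (Function.update c r (c' r)) ≠ piv a b c := by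
    intro hle hw
    obtain ⟨r, hr0, hr1⟩ := exists_up hle hne
    refine ⟨r, by rw [hr0, hr1]; simp, ?_⟩
    rw [hr1]
    have hwu : wtv (Function.update c r true) = wtv c + 1 := wtv_update_true c r hr0
    rcases hw with hw | hw
    · rw [pA c hw]
      have : wtv (Function.update c r true) = a := by omega
      simp only [piv, this, decide_eq_true_eq, ne_eq, Bool.not_eq_false, decide_eq_true_eq]
      omega
    · rw [pB c hw]
      have : wtv (Function.update c r true) = b + 1 := by omega
      rw [pC _ this]; simp
  -- case of a "down" flip: c r = true, c' r = false
  have down : wtv c' ≤ wtv c → wtv c = b + 1 →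
      ∃ r, c r ≠ c' r ∧ piv a b (Function.update c r (c' r)) ≠ piv a b c := by
    intro hle hw
    obtain ⟨r, hr0, hr1⟩ := exists_up (c := c') (c' := c) hle (Ne.symm hne)
    refine ⟨r, by rw [hr0, hr1]; simp, ?_⟩
    rw [hr0]
    have hwu : wtv (Function.update c r false) + 1 = wtv c := wtv_update_false c r hr1
    rw [pC c hw]
    have : wtv (Function.update c r false) = b := by omega
    rw [pB _ this]; simp
  rcases hc with hw | hw | hw
  · rcases hc' with hw' | hw' | hw'
    · exact up (by omega) (Or.inl hw)
    · rw [pA c hw, pB c' hw'] at hpi; simp at hpi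
    · exact up (by omega) (Or.inl hw)
  · rcases hc' with hw' | hw' | hw'
    · rw [pB c hw, pA c' hw'] at hpi; simp at hpi
    · exact up (by omega) (Or.inr hw)
    · rw [pB c hw, pC c' hw'] at hpi; simp at hpi
  · rcases hc' with hw' | hw' | hw'
    · exact down (by omega) hw
    · rw [pC c hw, pB c' hw'] at hpi; simp at hpi
    · exact down (by omega) hw

/-- Boolean vectors of fixed weight are counted by binomial coefficients. -/
lemma card_wtv_eq (n w : ℕ) :
    Fintype.card {c : Fin n → Bool // wtv c = w} = n.choose w := by
  classical
  have e : {c : Fin n → Bool // wtv c = w} ≃ {s : Finset (Fin n) // s.card = w} :=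
    { toFun := fun c => ⟨Finset.univ.filter fun i => c.1 i = true, c.2⟩
      invFun := fun s => ⟨fun i => decide (i ∈ s.1), by
        simp only [wtv, decide_eq_true_eq]
        rw [Finset.filter_mem_eq_inter, Finset.univ_inter]
        exact s.2⟩
      left_inv := fun c => by
        ext i
        simp
      right_inv := fun s => by
        ext i
        simp }
  rw [Fintype.card_congr e, Fintype.card_finset_len, Fintype.card_fin]

lemma card_wtv_three (n a b : ℕ) (ha : 1 ≤ a) (hab : a ≤ b) :
    Fintype.card {c : Fin n → Bool // wtv c = a - 1 ∨ wtv c = b ∨ wtv c = b + 1}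
      = n.choose (a - 1) + n.choose b + n.choose (b + 1) := by
  classical
  rw [Fintype.card_subtype]
  have h1 : (Finset.univ.filter fun c : Fin n → Bool =>
      wtv c = a - 1 ∨ wtv c = b ∨ wtv c = b + 1)
      = (Finset.univ.filter fun c => wtv c = a - 1)
        ∪ ((Finset.univ.filter fun c => wtv c = b)
          ∪ (Finset.univ.filter fun c => wtv c = b + 1)) := by
    ext c; simp [or_assoc]
  rw [h1, Finset.card_union_of_disjoint, Finset.card_union_of_disjoint]
  · have hc : ∀ w : ℕ, (Finset.univ.filter fun c : Fin n → Bool => wtv c = w).card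
        = n.choose w := by
      intro w
      rw [← Fintype.card_subtype, card_wtv_eq]
    rw [hc, hc, hc, Nat.add_assoc]
  · rw [Finset.disjoint_filter]
    intro c _ h h'
    omega
  · rw [Finset.disjoint_left]
    intro c hcm hcm'
    simp only [Finset.mem_union, Finset.mem_filter, Finset.mem_univ, true_and] at hcm hcm'
    omega

/-- For `a + b ≤ n`, any partition of `({0,1}^N)^n` into
`Π_{[a,b]}^N`-monochromatic boxes has at least
`(C(n,a−1) + C(n,b) + C(n,b+1))^N = (C(n+1,b+1) + C(n,a−1))^N` parts. -/
theorem interval_partition_lower_bound_low (n N a b : ℕ)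
    (hn : 2 ≤ n) (hN : 1 ≤ N) (ha : 1 ≤ a) (hab : a ≤ b) (hb : b ≤ n - 1)
    (hsum : a + b ≤ n)
    {ι : Type*} [Fintype ι]
    (A : ι → Fin n → Set (Fin N → Bool))
    (hdisj : ∀ i j, i ≠ j →
      Disjoint {M : Fin n → Fin N → Bool | ∀ r, M r ∈ A i r}
               {M : Fin n → Fin N → Bool | ∀ r, M r ∈ A j r})
    (hcover : ⋃ i, {M : Fin n → Fin N → Bool | ∀ r, M r ∈ A i r} = Set.univ)
    (hmono : ∀ i, ∀ M ∈ {M : Fin n → Fin N → Bool | ∀ r, M r ∈ A i r},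
                  ∀ M' ∈ {M : Fin n → Fin N → Bool | ∀ r, M r ∈ A i r},
      blockInterval a b M = blockInterval a b M') :
    (n.choose (a - 1) + n.choose b + n.choose (b + 1)) ^ N ≤ Fintype.card ι ∧
    (n.choose (a - 1) + n.choose b + n.choose (b + 1)) ^ N
      = ((n + 1).choose (b + 1) + n.choose (a - 1)) ^ N := by
  classical
  have hbi : ∀ (M : Fin n → Fin N → Bool) (j : Fin N),
      blockInterval a b M j = piv a b (fun i => M i j) := fun M j => rfl
  constructor
  · -- the fooling-set lower bound
    set G := {c : Fin n → Bool // wtv c = a - 1 ∨ wtv c = b ∨ wtv c = b + 1} with hG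
    have hmem : ∀ M : Fin n → Fin N → Bool, ∃ i, ∀ r, M r ∈ A i r := by
      intro M
      have : M ∈ ⋃ i, {M : Fin n → Fin N → Bool | ∀ r, M r ∈ A i r} := by
        rw [hcover]; trivial
      simpa [Set.mem_iUnion] using this
    let Mg : (Fin N → G) → Fin n → Fin N → Bool := fun g i j => (g j).1 i
    let Φ : (Fin N → G) → ι := fun g => Classical.choose (hmem (Mg g))
    have hΦ : ∀ g, ∀ r, Mg g r ∈ A (Φ g) r := fun g => Classical.choose_spec (hmem (Mg g))
    have hinj : Function.Injective Φ := by
      intro g g' hgg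
      by_contra hne
      have : ∃ j, g j ≠ g' j := by
        by_contra h; push_neg at h; exact hne (funext h)
      obtain ⟨j, hj⟩ := this
      set c := (g j).1 with hcdef
      set c' := (g' j).1 with hcdef'
      have hcne : c ≠ c' := fun h => hj (Subtype.ext h)
      have hmono1 : blockInterval a b (Mg g) = blockInterval a b (Mg g') :=
        hmono (Φ g) (Mg g) (hΦ g) (Mg g') (hgg ▸ hΦ g')
      have hpi : piv a b c = piv a b c' := by
        have := congrFun hmono1 j
        rwa [hbi, hbi] at this
      obtain ⟨r0, hr0, hflip⟩ := col_step ha hab (g j).2 (g' j).2 hcne hpi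
      -- the mixed matrix
      set Mix : Fin n → Fin N → Bool :=
        fun i j' => if i = r0 then Mg g' i j' else Mg g i j' with hMix
      have hMixMem : ∀ r, Mix r ∈ A (Φ g) r := by
        intro r
        by_cases h : r = r0
        · have : Mix r = Mg g' r := by funext j'; simp [hMix, h]
          rw [this]
          exact (hgg ▸ hΦ g') r
        · have : Mix r = Mg g r := by funext j'; simp [hMix, h]
          rw [this]
          exact hΦ g r
      have hmono2 : blockInterval a b Mix = blockInterval a b (Mg g) :=
        hmono (Φ g) Mix hMixMem (Mg g) (hΦ g)
      have hcol : (fun i => Mix i j) = Function.update c r0 (c' r0) := by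
        funext i
        by_cases h : i = r0
        · subst h; simp [hMix, Function.update_apply]; rfl
        · simp [hMix, h, Function.update_apply]; rfl
      have := congrFun hmono2 j
      rw [hbi, hbi, hcol] at this
      exact hflip this
    calc (n.choose (a - 1) + n.choose b + n.choose (b + 1)) ^ N
        = Fintype.card (Fin N → G) := by
          rw [Fintype.card_fun, Fintype.card_fin, card_wtv_three n a b ha hab]
      _ ≤ Fintype.card ι := Fintype.card_le_of_injective Φ hinj
  · congr 1
    rw [Nat.choose_succ_succ]
    simp only [Nat.succ_eq_add_one]
    omega
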